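/- Let W be a local ring with maximal ideal (p) and residue characteristic p, let L be a free W-module with basis f₀, e (among possibly more basis elements), and suppose given an endomorphism Π of L⊗Frac(W) with Π² = p. Suppose Π f₀ = ε₁ p^{ν₁} f₁ + p^n ξ₁ and Π f₁ = ε₀ p^{ν₀} f₀ + p^n ξ₀ with ε₀, ε₁ ∈ W^×, ν₀, ν₁ ≥ 0 integers, ξ₀, ξ₁ ∈ L, n ≥ 2, and that f₀ is part of a W-basis of L. Then ν₀ + ν₁ = 1, i.e. exactly one of ν₀, ν₁ equals 1 and the other equals 0. -/

import Mathlib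

lemma key_scalar (W : Type*) [CommRing W] [IsLocalRing W] [IsDomain W]
    (p : W) (hp : p ∈ IsLocalRing.maximalIdeal W) (hp0 : p ≠ 0)
    (u : W) (hu : IsUnit u) (m n : ℕ) (hn : 2 ≤ n) (c : W)
    (heq : p = u * p ^ m + p ^ n * c) : m = 1 := by
  rcases Nat.lt_or_ge m 2 with hm | hm
  · interval_cases m
    · exfalso
      have : u = p * (1 - p ^ (n - 1) * c) := by
        have hn' : p ^ n = p * p ^ (n - 1) := by
          rw [← pow_succ']
          congr 1
          omega
        rw [hn'] at heq
        linear_combination -heq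
      exact (IsLocalRing.maximalIdeal.isMaximal W).ne_top
        (Ideal.eq_top_of_isUnit_mem _ (this ▸ Ideal.mul_mem_right _ _ hp) hu)
    · rfl
  · exfalso
    have hpu : IsUnit p := by
      have h2 : p * 1 = p * (p * (u * p ^ (m - 2) + p ^ (n - 2) * c)) := by
        have hm' : p ^ m = p * (p * p ^ (m - 2)) := by
          rw [← pow_succ', ← pow_succ']; congr 1; omega
        have hn' : p ^ n = p * (p * p ^ (n - 2)) := by
          rw [← pow_succ', ← pow_succ']; congr 1; omega
        rw [hm', hn'] at heq
        linear_combination heq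
      have := mul_left_cancel₀ hp0 h2
      exact IsUnit.of_mul_eq_one _ this.symm
    exact (IsLocalRing.maximalIdeal.isMaximal W).ne_top
      (Ideal.eq_top_of_isUnit_mem _ hp hpu)

/-- Let `W` be a local domain with `p ≠ 0` in its maximal ideal, `L` a free
`W`-module with basis element `f₀ = b i₀`, and `P : L → L` a `W`-linear map with
`P ∘ P = p·id`. If `P f₀ = ε₁ p^{ν₁} f₁ + p^n ξ₁` and `P f₁ = ε₀ p^{ν₀} f₀ + p^n ξ₀`
with `ε₀, ε₁` units and `n ≥ 2`, then `ν₀ + ν₁ = 1`. -/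
theorem stmt_17 (W : Type*) [CommRing W] [IsLocalRing W] [IsDomain W]
    (p : W) (hp : p ∈ IsLocalRing.maximalIdeal W) (hp0 : p ≠ 0)
    (L : Type*) [AddCommGroup L] [Module W L]
    (ι : Type*) (b : Module.Basis ι W L) (i₀ : ι)
    (P : L →ₗ[W] L) (hP : P ∘ₗ P = p • LinearMap.id)
    (f₁ : L) (ε₀ ε₁ : W) (hε₀ : IsUnit ε₀) (hε₁ : IsUnit ε₁)
    (ν₀ ν₁ : ℕ) (ξ₀ ξ₁ : L) (n : ℕ) (hn : 2 ≤ n)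
    (h0 : P (b i₀) = ε₁ • p ^ ν₁ • f₁ + p ^ n • ξ₁)
    (h1 : P f₁ = ε₀ • p ^ ν₀ • b i₀ + p ^ n • ξ₀) :
    ν₀ + ν₁ = 1 := by
  have hPP : P (P (b i₀)) = p • b i₀ := by
    have := LinearMap.congr_fun hP (b i₀)
    simpa using this
  rw [h0] at hPP
  simp only [map_add, map_smul, h1, smul_add, smul_smul] at hPP
  -- apply b.repr at i₀
  have hco := congrArg (fun x => b.repr x i₀) hPP
  simp only [map_add, map_smul, Module.Basis.repr_self, Finsupp.coe_add, Finsupp.coe_smul,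
    Pi.add_apply, Pi.smul_apply, Finsupp.single_eq_same, smul_eq_mul, mul_one] at hco
  set r₀ := b.repr ξ₀ i₀ with hr₀
  set r₁ := b.repr (P ξ₁) i₀ with hr₁
  have heq : p = (ε₀ * ε₁) * p ^ (ν₀ + ν₁) + p ^ n * (ε₁ * p ^ ν₁ * r₀ + r₁) := by
    rw [pow_add]
    linear_combination -hco
  exact key_scalar W p hp hp0 (ε₀ * ε₁) (hε₀.mul hε₁) _ n hn _ heq
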